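/- There does not exist a sequence (g_n) of zero-free continuous functions g_n : ℝ² → ℂ converging, uniformly on compact subsets of ℝ², to the characteristic function of the probability measure μ = (1/3)δ_{(0,1)} + (1/3)δ_{(1,0)} + (1/3)δ_{(1,1)} on ℝ². -/

import Mathlib

open MeasureTheory Filter

/-- The measure `μ = (1/3)δ_{(0,1)} + (1/3)δ_{(1,0)} + (1/3)δ_{(1,1)}` on `ℝ²`. -/
noncomputable def mu : Measure (ℝ × ℝ) :=
  (1 / 3 : ENNReal) • Measure.dirac ((0 : ℝ), (1 : ℝ)) +
  (1 / 3 : ENNReal) • Measure.dirac ((1 : ℝ), (0 : ℝ)) +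
  (1 / 3 : ENNReal) • Measure.dirac ((1 : ℝ), (1 : ℝ))

namespace NoZeroFreeAux

open Complex

/-! ### Generalities: discrete winding argument -/

lemma re_div_pos {z w : ℂ} (h : dist z w < ‖w‖) : 0 < (z / w).re := by
  have hw : w ≠ 0 := by
    intro h0
    rw [h0] at h
    simp at h
    exact (norm_nonneg z).not_gt h
  have h1 : ‖z / w - 1‖ < 1 := by
    have he : z / w - 1 = (z - w) / w := by field_simp
    rw [he, norm_div, div_lt_one (by simpa using norm_pos_iff.mpr hw)]
    simpa [Complex.dist_eq] using h
  have h2 : |(z / w - 1).re| < 1 := lt_of_le_of_lt (Complex.abs_re_le_norm _) h1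
  have h3 : (z / w - 1).re = (z / w).re - 1 := by simp
  rw [h3, abs_lt] at h2
  linarith [h2.1]

lemma exp_arg_mul_I {z : ℂ} (hz : z ≠ 0) :
    Complex.exp ((z.arg : ℂ) * I) = z / (‖z‖ : ℂ) := by
  have h := Complex.norm_mul_exp_arg_mul_I z
  have ha : (‖z‖ : ℂ) ≠ 0 := by
    simpa using norm_ne_zero_iff.mpr hz
  field_simp
  linear_combination h

lemma cell {a b c d : ℂ} (h1 : 0 < (b / a).re) (h2 : 0 < (d / b).re)
    (h3 : 0 < (c / a).re) (h4 : 0 < (d / c).re) :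
    arg (b / a) + arg (d / b) = arg (c / a) + arg (d / c) := by
  have ha : a ≠ 0 := by rintro rfl; simp at h1
  have hb : b ≠ 0 := by rintro rfl; simp at h2
  have hc : c ≠ 0 := by rintro rfl; simp at h4
  have hd : d ≠ 0 := by rintro rfl; simp at h2
  have hba : b / a ≠ 0 := div_ne_zero hb ha
  have hdb : d / b ≠ 0 := div_ne_zero hd hb
  have hca : c / a ≠ 0 := div_ne_zero hc ha
  have hdc : d / c ≠ 0 := div_ne_zero hd hc
  have h5 : (‖a‖ : ℂ) ≠ 0 := by simpa using norm_ne_zero_iff.mpr ha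
  have h6 : (‖b‖ : ℂ) ≠ 0 := by simpa using norm_ne_zero_iff.mpr hb
  have h7 : (‖c‖ : ℂ) ≠ 0 := by simpa using norm_ne_zero_iff.mpr hc
  have h8 : (‖d‖ : ℂ) ≠ 0 := by simpa using norm_ne_zero_iff.mpr hd
  have e1 : Complex.exp (((arg (b/a) + arg (d/b) : ℝ) : ℂ) * I)
      = Complex.exp (((arg (c/a) + arg (d/c) : ℝ) : ℂ) * I) := by
    push_cast
    rw [add_mul, add_mul, Complex.exp_add, Complex.exp_add,
      exp_arg_mul_I hba, exp_arg_mul_I hdb, exp_arg_mul_I hca, exp_arg_mul_I hdc]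
    rw [norm_div, norm_div, norm_div, norm_div]
    push_cast
    field_simp
  have e2 : Complex.exp ((((arg (b/a) + arg (d/b)) - (arg (c/a) + arg (d/c)) : ℝ) : ℂ) * I) = 1 := by
    push_cast at e1 ⊢
    rw [sub_mul, Complex.exp_sub, e1, div_self (Complex.exp_ne_zero _)]
  rw [Complex.exp_eq_one_iff] at e2
  obtain ⟨n, hn⟩ := e2
  have hn' : ((arg (b/a) + arg (d/b)) - (arg (c/a) + arg (d/c)) : ℝ) = n * (2 * Real.pi) := by
    have h9 : (((arg (b/a) + arg (d/b)) - (arg (c/a) + arg (d/c)) : ℝ) : ℂ)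
        = (n : ℂ) * (2 * (Real.pi : ℂ)) := by
      refine mul_right_cancel₀ Complex.I_ne_zero ?_
      rw [hn]; ring
    exact_mod_cast h9
  have b1 : |arg (b/a)| < Real.pi / 2 := Complex.abs_arg_lt_pi_div_two_iff.mpr (Or.inl h1)
  have b2 : |arg (d/b)| < Real.pi / 2 := Complex.abs_arg_lt_pi_div_two_iff.mpr (Or.inl h2)
  have b3 : |arg (c/a)| < Real.pi / 2 := Complex.abs_arg_lt_pi_div_two_iff.mpr (Or.inl h3)
  have b4 : |arg (d/c)| < Real.pi / 2 := Complex.abs_arg_lt_pi_div_two_iff.mpr (Or.inl h4)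
  have hpi := Real.pi_pos
  have hnabs : |(n : ℝ)| < 1 := by
    have hlt : |((arg (b/a) + arg (d/b)) - (arg (c/a) + arg (d/c)) : ℝ)| < 2 * Real.pi := by
      rw [abs_lt] at b1 b2 b3 b4 ⊢
      constructor <;> nlinarith
    rw [hn', abs_mul, abs_of_pos (by positivity : (0:ℝ) < 2 * Real.pi)] at hlt
    nlinarith [abs_nonneg (n:ℝ)]
  have hn0 : n = 0 := by
    have h10 : |n| < 1 := by exact_mod_cast hnabs
    have := abs_lt.mp h10
    omega
  rw [hn0] at hn'
  push_cast at hn'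
  linarith

lemma row {N : ℕ} {a b : ℕ → ℂ} (haN : a N = a 0) (hbN : b N = b 0)
    (h : ∀ k < N, 0 < (a (k+1) / a k).re ∧ 0 < (b (k+1) / b k).re ∧
      0 < (b k / a k).re ∧ 0 < (b (k+1) / a (k+1)).re) :
    ∑ k ∈ Finset.range N, arg (a (k+1) / a k) = ∑ k ∈ Finset.range N, arg (b (k+1) / b k) := by
  have key : ∀ k ∈ Finset.range N,
      arg (a (k+1) / a k) - arg (b (k+1) / b k)
        = arg (b k / a k) - arg (b (k+1) / a (k+1)) := by
    intro k hk
    rw [Finset.mem_range] at hk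
    obtain ⟨p1, p2, p3, p4⟩ := h k hk
    have := cell (a := a k) (b := a (k+1)) (c := b k) (d := b (k+1)) p1 p4 p3 p2
    linarith
  have h2 : ∑ k ∈ Finset.range N, (arg (a (k+1) / a k) - arg (b (k+1) / b k))
      = ∑ k ∈ Finset.range N, (arg (b k / a k) - arg (b (k+1) / a (k+1))) :=
    Finset.sum_congr rfl key
  rw [Finset.sum_sub_distrib] at h2
  rw [Finset.sum_range_sub' (fun k => arg (b k / a k)) N] at h2
  rw [haN, hbN] at h2
  simp at h2
  linarith

/-! ### The characteristic function and the explicit loop -/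

noncomputable def Phi (t : ℝ × ℝ) : ℂ :=
  (Complex.exp (Complex.I * (t.2 : ℂ)) + Complex.exp (Complex.I * (t.1 : ℂ)) +
    Complex.exp (Complex.I * ((t.1 + t.2 : ℝ) : ℂ))) / 3

lemma integral_mu (t : ℝ × ℝ) :
    (∫ z : ℝ × ℝ, Complex.exp (Complex.I * ((t.1 * z.1 + t.2 * z.2 : ℝ) : ℂ)) ∂mu) = Phi t := by
  set f : ℝ × ℝ → ℂ := fun z => Complex.exp (Complex.I * ((t.1 * z.1 + t.2 * z.2 : ℝ) : ℂ)) with hf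
  have hint : ∀ a : ℝ × ℝ, Integrable f (Measure.dirac a) := fun a =>
    (integrable_const (f a)).congr (ae_eq_dirac f).symm
  have hint' : ∀ a : ℝ × ℝ, Integrable f ((1/3 : ENNReal) • Measure.dirac a) := fun a =>
    (hint a).smul_measure (by norm_num)
  have h13 : ((1/3 : ENNReal)).toReal = (1/3 : ℝ) := by norm_num
  rw [mu, integral_add_measure ((hint' _).add_measure (hint' _)) (hint' _),
    integral_add_measure (hint' _) (hint' _),
    integral_smul_measure, integral_smul_measure, integral_smul_measure,
    integral_dirac, integral_dirac, integral_dirac, h13]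
  simp only [hf, Phi]
  norm_num
  ring

noncomputable def wf (s : ℝ) : ℂ := 1 + (1/4 : ℂ) * Complex.exp ((2 * Real.pi * s : ℝ) * Complex.I)

noncomputable def gam (s : ℝ) : ℝ × ℝ :=
  ((wf s).arg + Real.pi - Real.arccos (Real.cos ((wf s).arg) - ‖wf s‖ / 2),
   (wf s).arg + Real.pi + Real.arccos (Real.cos ((wf s).arg) - ‖wf s‖ / 2))

lemma wf_re (s : ℝ) : (wf s).re = 1 + (1/4) * Real.cos (2 * Real.pi * s) := by
  rw [wf, Complex.add_re, Complex.one_re]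
  norm_num
  rw [show (2:ℂ)*(Real.pi:ℂ)*(s:ℂ) = ((2*Real.pi*s : ℝ):ℂ) by push_cast; ring,
    Complex.exp_ofReal_mul_I_re]

lemma wf_re_ge (s : ℝ) : 3/4 ≤ (wf s).re := by
  rw [wf_re]
  nlinarith [Real.neg_one_le_cos (2 * Real.pi * s)]

lemma wf_abs_le (s : ℝ) : ‖wf s‖ ≤ 5/4 := by
  refine le_trans (norm_add_le _ _) ?_
  rw [norm_mul, Complex.norm_exp_ofReal_mul_I]
  norm_num

lemma wf_abs_ge (s : ℝ) : 3/4 ≤ ‖wf s‖ :=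
  le_trans (wf_re_ge s) (Complex.re_le_norm _)

lemma wf_ne (s : ℝ) : wf s ≠ 0 := by
  intro h
  have := wf_re_ge s
  rw [h] at this
  norm_num at this

lemma cos_arg_wf_ge (s : ℝ) : 3/5 ≤ Real.cos ((wf s).arg) := by
  rw [Complex.cos_arg (wf_ne s)]
  calc (3/5 : ℝ) = (3/4) / (5/4) := by norm_num
  _ ≤ (wf s).re / ‖wf s‖ :=
      div_le_div₀ (by linarith [wf_re_ge s]) (wf_re_ge s)
        (lt_of_lt_of_le (by norm_num) (wf_abs_ge s)) (wf_abs_le s)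

lemma d_mem (s : ℝ) : -1 ≤ Real.cos ((wf s).arg) - ‖wf s‖ / 2 ∧
    Real.cos ((wf s).arg) - ‖wf s‖ / 2 ≤ 1 := by
  constructor
  · linarith [cos_arg_wf_ge s, wf_abs_le s]
  · linarith [Real.cos_le_one ((wf s).arg), wf_abs_ge s]

lemma one_add_exp (x : ℝ) : 1 + Complex.exp (Complex.I * (x : ℂ)) =
    2 * (Real.cos (x/2) : ℂ) * Complex.exp (Complex.I * ((x/2 : ℝ) : ℂ)) := by
  have key : ∀ a : ℂ, 1 + Complex.exp (a + a)
      = 2 * ((Complex.exp (-a) + Complex.exp a)/2) * Complex.exp a := by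
    intro a
    rw [Complex.exp_add, Complex.exp_neg]
    have h := Complex.exp_ne_zero a
    field_simp
  have hx : Complex.I * (x:ℂ) = ((x/2:ℝ):ℂ)*Complex.I + ((x/2:ℝ):ℂ)*Complex.I := by
    push_cast; ring
  rw [Complex.ofReal_cos, Complex.cos, hx, key (((x/2:ℝ):ℂ)*Complex.I)]
  rw [neg_mul, mul_comm Complex.I (((x/2:ℝ):ℂ))]
  ring

lemma Phi_gam (s : ℝ) :
    Phi (gam s) = (1/12 : ℂ) * Complex.exp ((2 * Real.pi * s : ℝ) * Complex.I) := by
  obtain ⟨hd1, hd2⟩ := d_mem s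
  set u := (wf s).arg with hu
  set r := ‖wf s‖ with hr
  set d := Real.cos u - r/2 with hdd
  set A := Real.arccos d with hA
  have hcosA : Real.cos A = d := Real.cos_arccos hd1 hd2
  have ht1 : (gam s).1 = u + Real.pi - A := rfl
  have ht2 : (gam s).2 = u + Real.pi + A := rfl
  rw [Phi, ht1, ht2]
  have key : ∀ x y : ℝ, Complex.exp (Complex.I*(y:ℂ)) + Complex.exp (Complex.I*(x:ℂ))
      + Complex.exp (Complex.I*((x+y : ℝ):ℂ))
      = (1 + Complex.exp (Complex.I*(x:ℂ))) * (1 + Complex.exp (Complex.I*(y:ℂ))) - 1 := by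
    intro x y
    push_cast
    rw [mul_add, Complex.exp_add]
    ring
  rw [key, one_add_exp, one_add_exp]
  set X := (u + Real.pi - A)/2 with hX
  set Y := (u + Real.pi + A)/2 with hY
  have c1 := Real.cos_sub X Y
  have c2 := Real.cos_add X Y
  have hXY1 : X - Y = -A := by rw [hX, hY]; ring
  have hXY2 : X + Y = u + Real.pi := by rw [hX, hY]; ring
  rw [hXY1, Real.cos_neg, hcosA] at c1
  rw [hXY2, Real.cos_add_pi] at c2
  have hcc : Real.cos X * Real.cos Y = -(r/4) := by
    have h0 : d + -Real.cos u = Real.cos X * Real.cos Y + Real.sin X * Real.sin Y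
        + (Real.cos X * Real.cos Y - Real.sin X * Real.sin Y) := by
      rw [← c1, ← c2]
    rw [hdd] at h0
    linarith
  have hee : Complex.exp (Complex.I*((X:ℝ):ℂ)) * Complex.exp (Complex.I*((Y:ℝ):ℂ))
      = - Complex.exp (Complex.I * (u:ℂ)) := by
    rw [← Complex.exp_add]
    rw [show Complex.I*((X:ℝ):ℂ) + Complex.I*((Y:ℝ):ℂ)
        = Complex.I*(u:ℂ) + (Real.pi:ℂ) * Complex.I by rw [hX, hY]; push_cast; ring]
    rw [Complex.exp_add, Complex.exp_pi_mul_I]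
    ring
  have hw : (r:ℂ) * Complex.exp (Complex.I * (u:ℂ)) = wf s := by
    have h := Complex.norm_mul_exp_arg_mul_I (wf s)
    rw [mul_comm ((u:ℝ):ℂ) Complex.I] at h
    exact h
  have hwf1 : wf s - 1 = (1/4 : ℂ) * Complex.exp ((2 * Real.pi * s : ℝ) * Complex.I) := by
    rw [wf]; ring
  calc (2 * (Real.cos X : ℂ) * Complex.exp (Complex.I * ((X:ℝ):ℂ))
      * (2 * (Real.cos Y : ℂ) * Complex.exp (Complex.I * ((Y:ℝ):ℂ))) - 1) / 3
      = (4 * ((Real.cos X : ℂ) * (Real.cos Y : ℂ))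
        * (Complex.exp (Complex.I * ((X:ℝ):ℂ)) * Complex.exp (Complex.I * ((Y:ℝ):ℂ))) - 1) / 3 := by
        ring
    _ = (4 * ((-(r/4) : ℝ) : ℂ) * (- Complex.exp (Complex.I * (u:ℂ))) - 1) / 3 := by
        rw [hee, ← Complex.ofReal_mul, hcc]
    _ = ((r:ℂ) * Complex.exp (Complex.I * (u:ℂ)) - 1) / 3 := by
        push_cast
        ring
    _ = (1/12 : ℂ) * Complex.exp ((2 * Real.pi * s : ℝ) * Complex.I) := by
        rw [hw, hwf1]
        ring

lemma wf_cont : Continuous wf := by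
  unfold wf
  fun_prop

lemma arg_wf_cont : Continuous fun s => (wf s).arg := by
  rw [continuous_iff_continuousAt]
  intro s
  exact (Complex.continuousAt_arg (Or.inl (by linarith [wf_re_ge s]))).comp
    wf_cont.continuousAt

lemma gam_cont : Continuous gam := by
  have habs : Continuous fun s => ‖wf s‖ := continuous_norm.comp wf_cont
  have harc : Continuous fun s =>
      Real.arccos (Real.cos ((wf s).arg) - ‖wf s‖ / 2) :=
    Real.continuous_arccos.comp ((Real.continuous_cos.comp arg_wf_cont).sub (habs.div_const 2))
  exact ((arg_wf_cont.add continuous_const).sub harc).prodMk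
    ((arg_wf_cont.add continuous_const).add harc)

lemma wf_one : wf 1 = wf 0 := by
  unfold wf
  congr 1
  rw [show ((2 * Real.pi * 1 : ℝ) : ℂ) * Complex.I = 2 * (Real.pi:ℂ) * Complex.I by push_cast; ring,
    Complex.exp_two_pi_mul_I,
    show ((2 * Real.pi * 0 : ℝ) : ℂ) * Complex.I = 0 by push_cast; ring, Complex.exp_zero]

lemma gam_one : gam 1 = gam 0 := by
  unfold gam
  rw [wf_one]

lemma abs_Phi_gam (s : ℝ) : ‖Phi (gam s)‖ = 1/12 := by
  rw [Phi_gam, norm_mul, Complex.norm_exp_ofReal_mul_I]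
  norm_num

end NoZeroFreeAux

open NoZeroFreeAux Complex

/-- No sequence of zero-free continuous functions converges locally uniformly to the
characteristic function of `μ`. -/
theorem no_zero_free_approx_charFun_mu :
    ¬ ∃ g : ℕ → (ℝ × ℝ) → ℂ,
      (∀ n, Continuous (g n)) ∧
      (∀ n p, g n p ≠ 0) ∧
      (∀ K : Set (ℝ × ℝ), IsCompact K →
        TendstoUniformlyOn g
          (fun t => ∫ z : ℝ × ℝ,
            Complex.exp (Complex.I * ((t.1 * z.1 + t.2 * z.2 : ℝ) : ℂ)) ∂mu)
          atTop K) := by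
  rintro ⟨g, hgc, hgne, hconv⟩
  have hF : (fun t : ℝ × ℝ => ∫ z : ℝ × ℝ,
      Complex.exp (Complex.I * ((t.1 * z.1 + t.2 * z.2 : ℝ) : ℂ)) ∂mu) = Phi :=
    funext integral_mu
  set sq : Set (ℝ × ℝ) := (Set.Icc (0:ℝ) 1) ×ˢ (Set.Icc (0:ℝ) 1) with hsqdef
  have hsq : IsCompact sq := isCompact_Icc.prod isCompact_Icc
  set GamF : ℝ × ℝ → ℝ × ℝ := fun p => gam 0 + p.1 • (gam p.2 - gam 0) with hGamFdef
  have hGamFc : Continuous GamF :=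
    continuous_const.add (continuous_fst.smul ((gam_cont.comp continuous_snd).sub
      continuous_const))
  have hGamF1 : ∀ s : ℝ, GamF (1, s) = gam s := by
    intro s
    simp only [hGamFdef, one_smul]
    abel
  have hGamF0 : ∀ s : ℝ, GamF (0, s) = gam 0 := by
    intro s
    simp only [hGamFdef, zero_smul, add_zero]
  have hGamFone : ∀ v : ℝ, GamF (v, 1) = GamF (v, 0) := by
    intro v
    simp only [hGamFdef, gam_one]
  set K : Set (ℝ × ℝ) := GamF '' sq with hKdef
  have hKc : IsCompact K := hsq.image hGamFc
  have h := hconv K hKc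
  rw [hF, Metric.tendstoUniformlyOn_iff] at h
  obtain ⟨n, hn⟩ := (h (1/24) (by norm_num)).exists
  set G := g n with hGdef
  have hGne : ∀ p, G p ≠ 0 := hgne n
  set q : ℝ × ℝ → ℂ := fun p => G (GamF p) with hqdef
  have hqc : Continuous q := (hgc n).comp hGamFc
  obtain ⟨x₀, hx₀, hmin⟩ := hsq.exists_isMinOn
    ⟨(0,0), by constructor <;> exact ⟨le_refl 0, by norm_num⟩⟩
    ((continuous_norm.comp hqc).continuousOn)
  set m := ‖q x₀‖ with hm
  have hmpos : 0 < m := norm_pos_iff.mpr (hGne _)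
  have hmle : ∀ P ∈ sq, m ≤ ‖q P‖ := fun P hP => hmin hP
  obtain ⟨δ, hδpos, hδ⟩ := Metric.uniformContinuousOn_iff.mp
    (hsq.uniformContinuousOn_of_continuous hqc.continuousOn) (m/2) (by positivity)
  obtain ⟨N₀, hN₀⟩ := exists_nat_gt (1/δ)
  set N := N₀ + 5 with hNdef
  have hNpos : (0:ℝ) < (N:ℝ) := by positivity
  have hNne : (N:ℝ) ≠ 0 := ne_of_gt hNpos
  have hN5 : (5:ℝ) ≤ (N:ℝ) := by
    rw [hNdef]
    push_cast
    linarith [Nat.cast_nonneg (α := ℝ) N₀]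
  have hNδ : 1/(N:ℝ) < δ := by
    rw [div_lt_iff₀ hNpos]
    have h1 : (1:ℝ)/δ < N₀ := hN₀
    have h2 : (N₀ : ℝ) ≤ N := by rw [hNdef]; push_cast; linarith
    have : 1/δ < (N:ℝ) := lt_of_lt_of_le h1 h2
    calc (1:ℝ) = δ * (1/δ) := by field_simp
    _ < δ * N := by
        apply mul_lt_mul_of_pos_left this hδpos
  -- grid facts
  have hmemI : ∀ j : ℕ, j ≤ N → (j:ℝ)/N ∈ Set.Icc (0:ℝ) 1 := by
    intro j hj
    constructor
    · positivity
    · rw [div_le_one hNpos]; exact_mod_cast hj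
  have hmemsq : ∀ j k : ℕ, j ≤ N → k ≤ N → ((j:ℝ)/N, (k:ℝ)/N) ∈ sq := by
    intro j k hj hk
    exact ⟨hmemI j hj, hmemI k hk⟩
  have hdistlt : ∀ a b a' b' : ℝ, |a - a'| ≤ 1/N → |b - b'| ≤ 1/N →
      dist ((a,b) : ℝ × ℝ) ((a',b') : ℝ × ℝ) < δ := by
    intro a b a' b' h1 h2
    rw [Prod.dist_eq]
    apply max_lt
    · rw [Real.dist_eq]; linarith
    · rw [Real.dist_eq]; linarith
  have habs1 : ∀ j : ℕ, |((j:ℝ))/N - ((j:ℝ)+1)/N| ≤ 1/N := by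
    intro j
    rw [div_sub_div_same, show (j:ℝ) - ((j:ℝ)+1) = -1 by ring, show (-1:ℝ)/N = -(1/N) by ring,
      abs_neg, abs_of_pos (by positivity)]
  have habs0 : ∀ x : ℝ, |x - x| ≤ 1/N := by
    intro x
    rw [sub_self, abs_zero]
    positivity
  -- positivity of real parts for adjacent grid values
  have hkey : ∀ P ∈ sq, ∀ P' ∈ sq, dist P P' < δ → 0 < (q P / q P').re := by
    intro P hP P' hP' hd
    apply re_div_pos
    calc dist (q P) (q P') < m/2 := hδ P hP P' hP' hd
    _ ≤ ‖q P'‖ := le_trans (by linarith) (hmle P' hP')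
  -- rows of the shrinking homotopy
  set A : ℕ → ℕ → ℂ := fun j k => q ((j:ℝ)/N, (k:ℝ)/N) with hAdef
  have hAcol : ∀ j : ℕ, A j N = A j 0 := by
    intro j
    simp only [hAdef]
    rw [div_self hNne, show ((0:ℕ):ℝ)/N = 0 by norm_num]
    simp only [hqdef, hGamFone]
  have hArow : ∀ j : ℕ, j ≤ N → (∑ k ∈ Finset.range N, arg (A j (k+1) / A j k)) = 0 := by
    intro j
    induction j with
    | zero =>
      intro _
      apply Finset.sum_eq_zero
      intro k _
      have hz : ∀ k : ℕ, A 0 k = G (gam 0) := by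
        intro k
        simp only [hAdef, hqdef]
        rw [show ((0:ℕ):ℝ)/N = 0 by norm_num, hGamF0]
      rw [hz (k+1), hz k, div_self (hGne _), Complex.arg_one]
    | succ i ih =>
      intro hj
      have hi : i ≤ N := le_trans (Nat.le_succ i) hj
      rw [← ih hi]
      symm
      apply row (hAcol i) (hAcol (i+1))
      intro k hk
      have hk1 : k + 1 ≤ N := hk
      have hkN : k ≤ N := le_of_lt hk
      have hadj : ∀ (j₁ k₁ j₂ k₂ : ℕ), j₁ ≤ N → k₁ ≤ N → j₂ ≤ N → k₂ ≤ N →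
          |(j₁:ℝ)/N - (j₂:ℝ)/N| ≤ 1/N → |(k₁:ℝ)/N - (k₂:ℝ)/N| ≤ 1/N →
          0 < (A j₁ k₁ / A j₂ k₂).re := by
        intro j₁ k₁ j₂ k₂ hj₁ hk₁ hj₂ hk₂ hd1 hd2
        exact hkey _ (hmemsq _ _ hj₁ hk₁) _ (hmemsq _ _ hj₂ hk₂) (hdistlt _ _ _ _ hd1 hd2)
      have hcast : ((k+1 : ℕ):ℝ) = (k:ℝ) + 1 := by push_cast; ring
      have hcast' : ((i+1 : ℕ):ℝ) = (i:ℝ) + 1 := by push_cast; ring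
      have habs1' : ∀ j : ℕ, |((j:ℝ)+1)/N - (j:ℝ)/N| ≤ 1/N := by
        intro j
        rw [abs_sub_comm]
        exact habs1 j
      refine ⟨?_, ?_, ?_, ?_⟩
      · apply hadj i (k+1) i k hi hk1 hi hkN (habs0 _)
        rw [hcast]; exact habs1' k
      · apply hadj (i+1) (k+1) (i+1) k hj hk1 hj hkN (habs0 _)
        rw [hcast]; exact habs1' k
      · apply hadj (i+1) k i k hj hkN hi hkN ?_ (habs0 _)
        rw [hcast']; exact habs1' i
      · apply hadj (i+1) (k+1) i (k+1) hj hk1 hi hk1 ?_ (habs0 _)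
        rw [hcast']; exact habs1' i
  -- the top row equals the loop values
  have hAN : ∀ k : ℕ, A N k = G (gam ((k:ℝ)/N)) := by
    intro k
    simp only [hAdef, hqdef]
    rw [div_self hNne, hGamF1]
  -- closeness of G to Phi on the loop
  have hclose : ∀ s : ℝ, s ∈ Set.Icc (0:ℝ) 1 → dist (Phi (gam s)) (G (gam s)) < 1/24 := by
    intro s hs
    apply hn
    rw [hKdef]
    exact ⟨(1, s), ⟨⟨zero_le_one, le_refl 1⟩, hs⟩, hGamF1 s⟩
  -- the Phi row
  set B : ℕ → ℂ := fun k => Phi (gam ((k:ℝ)/N)) with hBdef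
  have hBcol : B N = B 0 := by
    simp only [hBdef]
    rw [div_self hNne, show ((0:ℕ):ℝ)/N = 0 by norm_num, gam_one]
  have hratio : ∀ k : ℕ, B (k+1) / B k = Complex.exp (((2*Real.pi/N : ℝ):ℂ) * Complex.I) := by
    intro k
    simp only [hBdef]
    rw [Phi_gam, Phi_gam]
    rw [mul_div_mul_left _ _ (by norm_num : (1/12 : ℂ) ≠ 0), ← Complex.exp_sub]
    congr 1
    rw [← sub_mul, ← Complex.ofReal_sub]
    congr 2
    push_cast
    field_simp
    ring
  have hpi := Real.pi_pos
  have hbound : 2*Real.pi/(N:ℝ) < Real.pi/2 := by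
    rw [div_lt_div_iff₀ hNpos (by norm_num : (0:ℝ) < 2)]
    nlinarith
  have hbpos : 0 < 2*Real.pi/(N:ℝ) := by positivity
  have hargB : ∀ k : ℕ, arg (B (k+1) / B k) = 2*Real.pi/N := by
    intro k
    rw [hratio k, Complex.exp_mul_I]
    exact Complex.arg_cos_add_sin_mul_I ⟨by linarith, by linarith⟩
  have hreB : ∀ k : ℕ, 0 < (B (k+1) / B k).re := by
    intro k
    rw [hratio k, Complex.exp_ofReal_mul_I_re]
    exact Real.cos_pos_of_mem_Ioo ⟨by linarith, hbound⟩
  have hvert : ∀ k : ℕ, k ≤ N → 0 < (A N k / B k).re := by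
    intro k hk
    apply re_div_pos
    have h1 : ‖B k‖ = 1/12 := abs_Phi_gam _
    have h2 : dist (Phi (gam ((k:ℝ)/N))) (G (gam ((k:ℝ)/N))) < 1/24 :=
      hclose _ (hmemI k hk)
    rw [hAN k, h1]
    rw [dist_comm] at h2
    calc dist (G (gam ((k:ℝ)/N))) (B k) < 1/24 := h2
    _ < 1/12 := by norm_num
  have hhor : ∀ k : ℕ, k < N → 0 < (A N (k+1) / A N k).re := by
    intro k hk
    have hk1 : k + 1 ≤ N := hk
    have hkN : k ≤ N := le_of_lt hk
    have habs1' : |((k:ℝ)+1)/N - (k:ℝ)/N| ≤ 1/N := by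
      rw [abs_sub_comm]
      exact habs1 k
    have hcast : ((k+1 : ℕ):ℝ) = (k:ℝ) + 1 := by push_cast; ring
    apply hkey _ (hmemsq _ _ (le_refl N) hk1) _ (hmemsq _ _ (le_refl N) hkN)
    apply hdistlt _ _ _ _ (habs0 _)
    rw [hcast]
    exact habs1'
  have hfinal : (∑ k ∈ Finset.range N, arg (B (k+1) / B k))
      = ∑ k ∈ Finset.range N, arg (A N (k+1) / A N k) := by
    apply row hBcol (hAcol N)
    intro k hk
    exact ⟨hreB k, hhor k hk, hvert k (le_of_lt hk), hvert (k+1) hk⟩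
  have hsum1 : (∑ k ∈ Finset.range N, arg (B (k+1) / B k)) = 2*Real.pi := by
    rw [Finset.sum_congr rfl (fun k _ => hargB k), Finset.sum_const, Finset.card_range,
      nsmul_eq_mul]
    field_simp
  rw [hsum1, hArow N (le_refl N)] at hfinal
  linarith
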